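/- Let (X, μ) be a σ-finite measure space, N ≥ 1 an integer, p ≥ 2 a real number with conjugate exponent p' = p/(p−1). Let F : X → ℝ^N be p-integrable (F ∈ L^p(μ)) and Γ : X → ℝ^N be p'-integrable (Γ ∈ L^{p'}(μ)). Suppose that for every p-integrable σ : X → ℝ^N one has ∫_X ⟨Γ(x) − ‖σ(x)‖^{p−2}·σ(x), F(x) − σ(x)⟩ dμ(x) ≥ 0. Then Γ(x) = ‖F(x)‖^{p−2}·F(x) for μ-almost every x ∈ X. -/

import Mathlib

open MeasureTheory Filter Topology
open scoped ENNReal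

theorem minty_identification
    {X : Type*} [MeasurableSpace X] (μ : Measure X) [SigmaFinite μ]
    (N : ℕ) (hN : 1 ≤ N) (p : ℝ) (hp : 2 ≤ p)
    (F Γ : X → EuclideanSpace ℝ (Fin N))
    (hF : MemLp F (ENNReal.ofReal p) μ)
    (hΓ : MemLp Γ (ENNReal.ofReal (p / (p - 1))) μ)
    (h : ∀ σ : X → EuclideanSpace ℝ (Fin N), MemLp σ (ENNReal.ofReal p) μ →
        0 ≤ ∫ x, (inner ℝ (Γ x - ‖σ x‖ ^ (p - 2) • σ x) (F x - σ x) : ℝ) ∂μ) :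
    ∀ᵐ x ∂μ, Γ x = ‖F x‖ ^ (p - 2) • F x := by
  have hp2 : (0:ℝ) ≤ p - 2 := by linarith
  have hp1 : (0:ℝ) < p - 1 := by linarith
  have hq1 : (1:ℝ) ≤ p / (p - 1) := by
    rw [le_div_iff₀ hp1]; linarith
  have hQ1 : (1:ℝ≥0∞) ≤ ENNReal.ofReal (p / (p - 1)) := by
    rw [← ENNReal.ofReal_one]; exact ENNReal.ofReal_le_ofReal hq1
  set Φ : EuclideanSpace ℝ (Fin N) → EuclideanSpace ℝ (Fin N) :=
    fun v => ‖v‖ ^ (p - 2) • v with hΦdef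
  have hΦc : Continuous Φ :=
    (continuous_norm.rpow_const (fun v => Or.inr hp2)).smul continuous_id
  have hΦnorm : ∀ v : EuclideanSpace ℝ (Fin N), ‖Φ v‖ = ‖v‖ ^ (p - 1) := by
    intro v
    by_cases hv : v = 0
    · simp [hΦdef, hv, Real.zero_rpow (ne_of_gt hp1)]
    · have h0 : ‖v‖ ≠ 0 := norm_ne_zero_iff.mpr hv
      have : ‖Φ v‖ = ‖v‖ ^ (p - 2) * ‖v‖ := by
        rw [hΦdef]
        simp only [norm_smul, Real.norm_eq_abs,
          abs_of_nonneg (Real.rpow_nonneg (norm_nonneg v) _)]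
      rw [this, ← Real.rpow_add_one h0]
      congr 1
      ring
  -- Φ ∘ F is in L^{p'}
  have hΦF : MemLp (fun x => Φ (F x)) (ENNReal.ofReal (p / (p - 1))) μ := by
    have h1 := hF.norm_rpow_div (ENNReal.ofReal (p - 1))
    rw [ENNReal.toReal_ofReal (le_of_lt hp1)] at h1
    rw [ENNReal.ofReal_div_of_pos hp1]
    refine MemLp.of_le h1 (hΦc.comp_aestronglyMeasurable hF.1) ?_
    filter_upwards with x
    rw [hΦnorm, Real.norm_eq_abs, abs_of_nonneg (Real.rpow_nonneg (norm_nonneg _) _)]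
  -- integrability on finite measure sets for L^{p'} functions
  have hint : ∀ (G : X → EuclideanSpace ℝ (Fin N)),
      MemLp G (ENNReal.ofReal (p / (p - 1))) μ →
      ∀ s : Set X, MeasurableSet s → μ s < ∞ → IntegrableOn G s μ := by
    intro G hG s _ hμs
    haveI : IsFiniteMeasure (μ.restrict s) :=
      ⟨by rw [Measure.restrict_apply_univ]; exact hμs⟩
    exact (hG.restrict s).integrable hQ1
  -- key step : scalar set integrals vanish
  have key : ∀ (e : EuclideanSpace ℝ (Fin N)) (s : Set X), MeasurableSet s → μ s < ∞ →
      ∫ x in s, (inner ℝ (Γ x - Φ (F x)) e : ℝ) ∂μ = 0 := by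
    intro e s hs hμs
    haveI : IsFiniteMeasure (μ.restrict s) :=
      ⟨by rw [Measure.restrict_apply_univ]; exact hμs⟩
    set g : ℝ → X → ℝ := fun t x => (inner ℝ (Γ x - Φ (F x + t • e)) e : ℝ) with hgdef
    have hg0 : ∀ x, g 0 x = (inner ℝ (Γ x - Φ (F x)) e : ℝ) := by
      intro x; simp [hgdef]
    -- sign information from the hypothesis h
    have hA : ∀ t : ℝ, t * ∫ x in s, g t x ∂μ ≤ 0 := by
      intro t
      set σ : X → EuclideanSpace ℝ (Fin N) :=
        fun x => F x + s.indicator (fun _ => t • e) x with hσdef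
      have hσmem : MemLp σ (ENNReal.ofReal p) μ :=
        hF.add (memLp_indicator_const _ hs (t • e) (Or.inr hμs.ne))
      have h0 := h σ hσmem
      have heq : (fun x => (inner ℝ (Γ x - ‖σ x‖ ^ (p - 2) • σ x) (F x - σ x) : ℝ))
          = s.indicator (fun x => -(t * g t x)) := by
        funext x
        by_cases hx : x ∈ s
        · have hσx : σ x = F x + t • e := by
            rw [hσdef]; simp [Set.indicator_of_mem hx]
          rw [Set.indicator_of_mem hx, hσx]
          have : F x - (F x + t • e) = -(t • e) := by abel
          rw [this, inner_neg_right, real_inner_smul_right]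
        · have hσx : σ x = F x := by
            rw [hσdef]; simp [Set.indicator_of_notMem hx]
          rw [Set.indicator_of_notMem hx, hσx]
          simp
      rw [heq, integral_indicator hs] at h0
      rw [integral_neg, integral_const_mul] at h0
      linarith
    -- dominated convergence
    have hDCT : ∀ u : ℕ → ℝ, Tendsto u atTop (𝓝 0) → (∀ n, |u n| ≤ 1) →
        Tendsto (fun n => ∫ x in s, g (u n) x ∂μ) atTop (𝓝 (∫ x in s, g 0 x ∂μ)) := by
      intro u hu hub
      refine tendsto_integral_of_dominated_convergence
        (fun x => (‖Γ x‖ + (‖F x‖ + ‖e‖) ^ (p - 1)) * ‖e‖) ?_ ?_ ?_ ?_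
      · intro n
        exact (hΓ.1.restrict.sub (hΦc.comp_aestronglyMeasurable
          (hF.1.restrict.add aestronglyMeasurable_const))).inner
          aestronglyMeasurable_const
      · have hΓi : Integrable (fun x => ‖Γ x‖) (μ.restrict s) :=
          (hint Γ hΓ s hs hμs).norm
        have hFi : Integrable (fun x => (‖F x‖ + ‖e‖) ^ (p - 1)) (μ.restrict s) := by
          have hmem : MemLp (fun x => ‖F x‖ + ‖e‖) (ENNReal.ofReal p) (μ.restrict s) :=
            (hF.restrict s).norm.add (memLp_const ‖e‖)
          have h2 := hmem.norm_rpow_div (ENNReal.ofReal (p - 1))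
          rw [ENNReal.toReal_ofReal (le_of_lt hp1), ← ENNReal.ofReal_div_of_pos hp1] at h2
          have h3 := h2.integrable hQ1
          refine h3.congr ?_
          filter_upwards with x
          rw [Real.norm_eq_abs, abs_of_nonneg (by positivity)]
        exact (hΓi.add hFi).mul_const ‖e‖
      · intro n
        filter_upwards with x
        have h1 : ‖g (u n) x‖ ≤ ‖Γ x - Φ (F x + u n • e)‖ * ‖e‖ := by
          rw [hgdef]; exact norm_inner_le_norm _ _
        have h2 : ‖Γ x - Φ (F x + u n • e)‖ ≤ ‖Γ x‖ + (‖F x‖ + ‖e‖) ^ (p - 1) := by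
          refine (norm_sub_le _ _).trans ?_
          gcongr
          rw [hΦnorm]
          refine Real.rpow_le_rpow (norm_nonneg _) ?_ (le_of_lt hp1)
          refine (norm_add_le _ _).trans ?_
          gcongr
          rw [norm_smul, Real.norm_eq_abs]
          calc |u n| * ‖e‖ ≤ 1 * ‖e‖ := by gcongr; exact hub n
            _ = ‖e‖ := one_mul _
        calc ‖g (u n) x‖ ≤ ‖Γ x - Φ (F x + u n • e)‖ * ‖e‖ := h1
          _ ≤ (‖Γ x‖ + (‖F x‖ + ‖e‖) ^ (p - 1)) * ‖e‖ :=
              mul_le_mul_of_nonneg_right h2 (norm_nonneg e)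
      · filter_upwards with x
        have hcont : Continuous (fun t : ℝ => g t x) := by
          rw [hgdef]
          exact (continuous_const.sub (hΦc.comp
            (continuous_const.add (continuous_id.smul continuous_const)))).inner
            continuous_const
        exact (hcont.tendsto 0).comp hu
    -- apply with positive and negative sequences
    have hu1 : Tendsto (fun n : ℕ => 1 / ((n : ℝ) + 1)) atTop (𝓝 0) :=
      tendsto_one_div_add_atTop_nhds_zero_nat
    have hub1 : ∀ n : ℕ, |1 / ((n : ℝ) + 1)| ≤ 1 := by
      intro n
      rw [abs_of_nonneg (by positivity)]
      rw [div_le_one (by positivity)]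
      linarith [Nat.cast_nonneg (α := ℝ) n]
    have hle : ∫ x in s, g 0 x ∂μ ≤ 0 := by
      refine le_of_tendsto (hDCT _ hu1 hub1) ?_
      filter_upwards with n
      have ht : (0:ℝ) < 1 / ((n : ℝ) + 1) := by positivity
      have := hA (1 / ((n : ℝ) + 1))
      nlinarith [this]
    have hge : 0 ≤ ∫ x in s, g 0 x ∂μ := by
      have hu2 : Tendsto (fun n : ℕ => -(1 / ((n : ℝ) + 1))) atTop (𝓝 0) := by
        have := hu1.neg
        rwa [neg_zero] at this
      have hub2 : ∀ n : ℕ, |-(1 / ((n : ℝ) + 1))| ≤ 1 := by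
        intro n; rw [abs_neg]; exact hub1 n
      refine ge_of_tendsto (hDCT _ hu2 hub2) ?_
      filter_upwards with n
      have ht : (0:ℝ) < 1 / ((n : ℝ) + 1) := by positivity
      have := hA (-(1 / ((n : ℝ) + 1)))
      nlinarith [this]
    have : ∫ x in s, g 0 x ∂μ = 0 := le_antisymm hle hge
    rw [← this]
    exact integral_congr_ae (Filter.Eventually.of_forall fun x => (hg0 x).symm)
  -- vector set integrals vanish
  have key2 : ∀ s : Set X, MeasurableSet s → μ s < ∞ →
      ∫ x in s, (Γ x - Φ (F x)) ∂μ = 0 := by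
    intro s hs hμs
    have hGint : IntegrableOn (fun x => Γ x - Φ (F x)) s μ :=
      (hint Γ hΓ s hs hμs).sub (hint _ hΦF s hs hμs)
    refine integral_eq_zero_of_forall_integral_inner_eq_zero ℝ _ hGint ?_
    intro c
    have := key c s hs hμs
    rw [← this]
    refine integral_congr_ae (Filter.Eventually.of_forall fun x => ?_)
    exact real_inner_comm _ _
  -- conclude a.e. equality
  have hzero : (fun x => Γ x - Φ (F x)) =ᵐ[μ] 0 :=
    ae_eq_zero_of_forall_setIntegral_eq_of_sigmaFinite
      (fun s hs hμs => (hint Γ hΓ s hs hμs).sub (hint _ hΦF s hs hμs))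
      (fun s hs hμs => key2 s hs hμs)
  filter_upwards [hzero] with x hx
  have : Γ x - Φ (F x) = 0 := hx
  have := sub_eq_zero.mp this
  rw [this, hΦdef]
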